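/- For every H ∈ (1/2, 1), the inequality ρ_1²·ρ_2 − ρ_2³ + ρ_1·ρ_2·ρ_3 − ρ_1² + ρ_2 − ρ_1·ρ_3 > 0 holds, where ρ_k = ρ_k(H); equivalently, the numerator of the projection coefficient Γ_4^3 of fractional Gaussian noise is strictly positive. (This expression factors as (1 − ρ_2)·(ρ_2 + ρ_2² − ρ_1² − ρ_1·ρ_3).) -/

import Mathlib

open Real Set Finset

/-- Autocovariance function of fractional Gaussian noise with Hurst parameter `H`:
`ρ_k(H) = ((k+1)^{2H} − 2·k^{2H} + (k−1)^{2H})/2` for `k ≥ 1`, and `ρ_0(H) = 1`. -/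
noncomputable def rho (H : ℝ) (k : ℕ) : ℝ :=
  if k = 0 then 1
  else (((k : ℝ) + 1) ^ (2 * H) - 2 * (k : ℝ) ^ (2 * H) + ((k : ℝ) - 1) ^ (2 * H)) / 2

set_option maxHeartbeats 2000000 in
theorem stmt_1 (H : ℝ) (hH : H ∈ Ioo (1 / 2 : ℝ) 1) :
    0 < (rho H 1) ^ 2 * rho H 2 - (rho H 2) ^ 3 + rho H 1 * rho H 2 * rho H 3
        - (rho H 1) ^ 2 + rho H 2 - rho H 1 * rho H 3 ∧
    (rho H 1) ^ 2 * rho H 2 - (rho H 2) ^ 3 + rho H 1 * rho H 2 * rho H 3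
        - (rho H 1) ^ 2 + rho H 2 - rho H 1 * rho H 3
      = (1 - rho H 2) * (rho H 2 + (rho H 2) ^ 2 - (rho H 1) ^ 2 - rho H 1 * rho H 3) := by
  obtain ⟨hH1, hH2⟩ := hH
  have ht1 : (1:ℝ) < 2*H := by linarith
  have ht2 : 2*H < 2 := by linarith
  set t : ℝ := 2*H with htdef
  have hρ1 : rho H 1 = ((2:ℝ)^t - 2)/2 := by
    simp only [rho, if_neg (one_ne_zero), Nat.cast_one]
    rw [show ((1:ℝ)+1) = 2 by norm_num, show ((1:ℝ)-1) = 0 by norm_num,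
      Real.one_rpow, Real.zero_rpow (by linarith)]
    ring
  have hρ2 : rho H 2 = ((3:ℝ)^t - 2*(2:ℝ)^t + 1)/2 := by
    simp only [rho, if_neg (two_ne_zero), Nat.cast_ofNat]
    rw [show ((2:ℝ)+1) = 3 by norm_num, show ((2:ℝ)-1) = 1 by norm_num, Real.one_rpow]
  have hρ3 : rho H 3 = ((4:ℝ)^t - 2*(3:ℝ)^t + (2:ℝ)^t)/2 := by
    simp only [rho, if_neg (by norm_num : (3:ℕ) ≠ 0), Nat.cast_ofNat]
    rw [show ((3:ℝ)+1) = 4 by norm_num, show ((3:ℝ)-1) = 2 by norm_num]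
  have e4 : (4:ℝ) = (2:ℝ)^(2:ℝ) := by
    rw [show (2:ℝ) = ((2:ℕ):ℝ) from by norm_num] ; rw [Real.rpow_natCast] ; norm_num
  have e8 : (8:ℝ) = (2:ℝ)^(3:ℝ) := by
    rw [show (3:ℝ) = ((3:ℕ):ℝ) from by norm_num, Real.rpow_natCast] ; norm_num
  set x : ℝ := (2:ℝ)^t with hxdef
  have hx2 : 2 < x := by
    have h := (Real.rpow_lt_rpow_left_iff (by norm_num : (1:ℝ) < 2)).mpr ht1
    rwa [Real.rpow_one] at h
  have hx4 : x < 4 := by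
    have h := (Real.rpow_lt_rpow_left_iff (by norm_num : (1:ℝ) < 2)).mpr ht2
    rwa [← e4] at h
  have hX4 : (4:ℝ)^t = x^2 := by
    rw [e4, ← Real.rpow_natCast x 2, hxdef, ← Real.rpow_mul (by norm_num),
      ← Real.rpow_mul (by norm_num)]
    norm_num [mul_comm]
  set p : ℝ := Real.logb 2 (3/2) with hpdef
  have h2p : (2:ℝ)^p = 3/2 := Real.rpow_logb (by norm_num) (by norm_num) (by norm_num)
  have hp0 : 0 < p := Real.logb_pos (by norm_num) (by norm_num)
  have hp1 : p < 1 := by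
    have h : Real.logb 2 (3/2) < Real.logb 2 2 :=
      Real.logb_lt_logb (by norm_num) (by norm_num) (by norm_num)
    simpa using h
  have hxp : x^p = (3/2:ℝ)^t := by
    rw [hxdef, ← Real.rpow_mul (by norm_num), mul_comm, Real.rpow_mul (by norm_num), h2p]
  have hY : (3:ℝ)^t = x * x^p := by
    rw [hxp, hxdef, ← Real.mul_rpow (by norm_num) (by norm_num)]
    norm_num
  have h4p : (4:ℝ)^p = 9/4 := by
    rw [e4, ← Real.rpow_mul (by norm_num), mul_comm, Real.rpow_mul (by norm_num), h2p]
    rw [show ((2:ℝ)) = ((2:ℕ):ℝ) from by norm_num, Real.rpow_natCast]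
    norm_num
  have h8p : (8:ℝ)^p = 27/8 := by
    rw [e8, ← Real.rpow_mul (by norm_num), mul_comm, Real.rpow_mul (by norm_num), h2p]
    rw [show ((3:ℝ)) = ((3:ℕ):ℝ) from by norm_num, Real.rpow_natCast]
    norm_num
  have hp31 : (31:ℝ)/53 ≤ p := by
    rw [hpdef, Real.le_logb_iff_rpow_le (by norm_num) (by norm_num)]
    have h1 : (2:ℝ) ^ ((31:ℝ)/53) = ((2:ℝ)^(31:ℕ)) ^ ((53:ℝ)⁻¹) := by
      rw [← Real.rpow_natCast 2 31, ← Real.rpow_mul (by norm_num)]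
      norm_num
    rw [h1, Real.rpow_inv_le_iff_of_pos (by positivity) (by norm_num) (by norm_num),
      show ((53:ℝ)) = ((53:ℕ):ℝ) from by norm_num, Real.rpow_natCast]
    norm_num
  have hnode : ∀ r q : ℝ, 1 < r → 0 ≤ q → q^(53:ℕ) ≤ r^(31:ℕ) → q ≤ r^p := by
    intro r q hr hq h
    have hr0 : (0:ℝ) ≤ r := by linarith
    have h1 : q ≤ r ^ ((31:ℝ)/53) := by
      have e : r ^ ((31:ℝ)/53) = (r^(31:ℕ))^((53:ℝ)⁻¹) := by
        rw [← Real.rpow_natCast r 31, ← Real.rpow_mul hr0]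
        norm_num
      rw [e, Real.le_rpow_inv_iff_of_pos hq (by positivity) (by norm_num),
        show ((53:ℝ)) = ((53:ℕ):ℝ) from by norm_num, Real.rpow_natCast]
      exact h
    exact h1.trans ((Real.rpow_le_rpow_left_iff hr).mpr hp31)
  have g3 : (19013/10000:ℝ) ≤ (3:ℝ)^p :=
    hnode 3 _ (by norm_num) (by norm_num) (by norm_num)
  have g35 : (20807/10000:ℝ) ≤ (3.5:ℝ)^p :=
    hnode 3.5 _ (by norm_num) (by norm_num) (by norm_num)
  have g39 : (22167/10000:ℝ) ≤ (3.9:ℝ)^p :=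
    hnode 3.9 _ (by norm_num) (by norm_num) (by norm_num)
  have hconc := Real.concaveOn_rpow hp0.le hp1.le
  have chord : ∀ x0 x1 : ℝ, 0 ≤ x0 → x0 ≤ x → x ≤ x1 → x0 < x1 →
      (x1 - x) * x0^p + (x - x0) * x1^p ≤ (x1 - x0) * x^p := by
    intro x0 x1 h0 hl hr hlt
    have hd : (0:ℝ) < x1 - x0 := by linarith
    have h1 : (0:ℝ) ≤ x1 := by linarith
    have ha : (0:ℝ) ≤ (x1 - x)/(x1 - x0) := div_nonneg (by linarith) hd.le
    have hb : (0:ℝ) ≤ (x - x0)/(x1 - x0) := div_nonneg (by linarith) hd.le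
    have hab : (x1 - x)/(x1 - x0) + (x - x0)/(x1 - x0) = 1 := by
      field_simp
      ring
    have hc := hconc.2 (mem_Ici.mpr h0) (mem_Ici.mpr h1) ha hb hab
    simp only [smul_eq_mul] at hc
    have he : (x1 - x)/(x1 - x0) * x0 + (x - x0)/(x1 - x0) * x1 = x := by
      field_simp
      try ring
    rw [he] at hc
    have h2 := mul_le_mul_of_nonneg_left hc hd.le
    calc (x1 - x) * x0^p + (x - x0) * x1^p
        = (x1 - x0) * ((x1 - x)/(x1 - x0) * x0^p + (x - x0)/(x1 - x0) * x1^p) := by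
          field_simp
          try ring
      _ ≤ (x1 - x0) * x^p := h2
  have hupper : x^p ≤ 9/8 + 9/32 * x := by
    have hd : (0:ℝ) < 8 - x := by linarith
    have ha : (0:ℝ) ≤ 4/(8 - x) := div_nonneg (by norm_num) hd.le
    have hb : (0:ℝ) ≤ (4 - x)/(8 - x) := div_nonneg (by linarith) hd.le
    have hab : 4/(8 - x) + (4 - x)/(8 - x) = 1 := by
      field_simp
      try ring
    have hc := hconc.2 (mem_Ici.mpr (by linarith : (0:ℝ) ≤ x))
      (mem_Ici.mpr (by norm_num : (0:ℝ) ≤ 8)) ha hb hab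
    simp only [smul_eq_mul] at hc
    have he : 4/(8 - x) * x + (4 - x)/(8 - x) * (8:ℝ) = 4 := by
      field_simp
      try ring
    rw [he, h4p, h8p] at hc
    have hc2 := mul_le_mul_of_nonneg_left hc hd.le
    have e : (8 - x) * (4/(8 - x) * x^p + (4 - x)/(8 - x) * (27/8))
        = 4 * x^p + (4 - x) * (27/8) := by
      field_simp
      try ring
    rw [e] at hc2
    nlinarith [hc2]
  have keyA : (3:ℝ)^t < 2*x + 1 := by
    rw [hY]
    have h1 : x * x^p ≤ x * (9/8 + 9/32*x) :=
      mul_le_mul_of_nonneg_left hupper (by linarith)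
    nlinarith [h1]
  have keyB : x^3 - 3*x^2 + 2*x + 1 < ((3:ℝ)^t - x)^2 := by
    have hxplb : ∃ L : ℝ, 1 < L ∧ L ≤ x^p ∧ x^3 - 3*x^2 + 2*x + 1 < (x*L - x)^2 := by
      rcases le_or_gt x 3 with h3 | h3
      · refine ⟨(3 - x) * (3/2) + (x - 2) * (19013/10000), by nlinarith, ?_,
          by nlinarith [sq_nonneg (x-2), sq_nonneg (x-3), sq_nonneg (x-5/2)]⟩
        have hc := chord 2 3 (by norm_num) (by linarith) h3 (by norm_num)
        rw [h2p] at hc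
        nlinarith [mul_le_mul_of_nonneg_left g3 (by linarith : (0:ℝ) ≤ x - 2)]
      · rcases le_or_gt x 3.5 with h35 | h35
        · refine ⟨2 * ((3.5 - x) * (19013/10000) + (x - 3) * (20807/10000)), by nlinarith, ?_,
            by nlinarith [sq_nonneg (x-3), sq_nonneg (x-3.5)]⟩
          have hc := chord 3 3.5 (by norm_num) h3.le h35 (by norm_num)
          have e1 := mul_le_mul_of_nonneg_left g3 (by linarith : (0:ℝ) ≤ 3.5 - x)
          have e2 := mul_le_mul_of_nonneg_left g35 (by linarith : (0:ℝ) ≤ x - 3)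
          nlinarith [hc, e1, e2]
        · rcases le_or_gt x 3.9 with h39 | h39
          · refine ⟨(5/2) * ((3.9 - x) * (20807/10000) + (x - 3.5) * (22167/10000)), by nlinarith, ?_,
              by nlinarith [sq_nonneg (x-3.5), sq_nonneg (x-3.9)]⟩
            have hc := chord 3.5 3.9 (by norm_num) h35.le h39 (by norm_num)
            have e1 := mul_le_mul_of_nonneg_left g35 (by linarith : (0:ℝ) ≤ 3.9 - x)
            have e2 := mul_le_mul_of_nonneg_left g39 (by linarith : (0:ℝ) ≤ x - 3.5)
            nlinarith [hc, e1, e2]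
          · refine ⟨10 * ((4 - x) * (22167/10000) + (x - 3.9) * (9/4)), by nlinarith, ?_,
              by nlinarith [sq_nonneg (x-3.9), sq_nonneg (x-4),
                mul_pos (sub_pos.mpr h39) (sub_pos.mpr hx4)]⟩
            have hc := chord 3.9 4 (by norm_num) h39.le hx4.le (by norm_num)
            rw [h4p] at hc
            have e1 := mul_le_mul_of_nonneg_left g39 (by linarith : (0:ℝ) ≤ 4 - x)
            nlinarith [hc, e1]
    obtain ⟨L, hL1, hLle, hLpoly⟩ := hxplb
    have hx0 : (0:ℝ) < x := by linarith
    have h1 : x * L - x ≤ (3:ℝ)^t - x := by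
      rw [hY]
      have h2 := mul_le_mul_of_nonneg_left hLle hx0.le
      linarith
    have h2 : (0:ℝ) < x * L - x := by nlinarith
    have h3 : (x*L - x)^2 ≤ ((3:ℝ)^t - x)^2 := by nlinarith
    linarith
  have hA : 0 < 1 - rho H 2 := by
    rw [hρ2]
    linarith [keyA]
  have hB : 0 < rho H 2 + (rho H 2)^2 - (rho H 1)^2 - rho H 1 * rho H 3 := by
    rw [hρ1, hρ2, hρ3, hX4]
    nlinarith [keyB]
  refine ⟨?_, by ring⟩
  have hid : (rho H 1) ^ 2 * rho H 2 - (rho H 2) ^ 3 + rho H 1 * rho H 2 * rho H 3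
        - (rho H 1) ^ 2 + rho H 2 - rho H 1 * rho H 3
      = (1 - rho H 2) * (rho H 2 + (rho H 2) ^ 2 - (rho H 1) ^ 2 - rho H 1 * rho H 3) := by
    ring
  rw [hid]
  exact mul_pos hA hB
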